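/- arXiv:1706.09860 — 2 statements merged into one kernel-verified Lean document; each statement's English description precedes it below -/
import Mathlib

section
/- Let T be a Dunford-Schwartz operator on ℓ∞ and 1 ≤ p < ∞. The set ℓ_p(T) of all x ∈ ℓ_p for which there exists x̂ ∈ ℓ_p with ‖(1/n) Σ_{k=0}^{n−1} T^k(x) − x̂‖_∞ → 0 is a closed subspace of (ℓ_p, ‖·‖_p). -/
open Filter Finset Topology

/-- The supremum norm of a real sequence. -/
noncomputable def supNorm (x : ℕ → ℝ) : ℝ := ⨆ n, |x n|

/-- `x` is a bounded sequence (i.e. `x ∈ ℓ∞`). -/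
def IsBdd (x : ℕ → ℝ) : Prop := ∃ C, ∀ n, |x n| ≤ C

/-- The non-increasing rearrangement of a bounded sequence, `0`-indexed:
`(x*)_n = inf over finite F with card F ≤ n of sup_{k ∉ F} |x k|`. -/
noncomputable def rearr (x : ℕ → ℝ) (n : ℕ) : ℝ :=
  sInf { r : ℝ | ∃ F : Finset ℕ, F.card ≤ n ∧ r = ⨆ k : {k : ℕ // k ∉ F}, |x k.1| }

/-- A Dunford–Schwartz operator: a linear operator which is an `ℓ₁`-contraction
and an `ℓ∞`-contraction. -/
def IsDS (T : (ℕ → ℝ) →ₗ[ℝ] (ℕ → ℝ)) : Prop :=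
  (∀ x : ℕ → ℝ, Summable (fun n => |x n|) →
      Summable (fun n => |T x n|) ∧ ∑' n, |T x n| ≤ ∑' n, |x n|) ∧
  (∀ x : ℕ → ℝ, IsBdd x → IsBdd (T x) ∧ supNorm (T x) ≤ supNorm x)

/-- The Cesàro average `A(n,T)(x) = (1/n) ∑_{k=0}^{n-1} T^k x`. -/
noncomputable def cesaro (T : (ℕ → ℝ) →ₗ[ℝ] (ℕ → ℝ)) (n : ℕ) (x : ℕ → ℝ) : ℕ → ℝ :=
  fun s => (∑ k ∈ Finset.range n, (⇑T)^[k] x s) / n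

/-- Membership in `ℓ_p`. -/
def Memlp (p : ℝ) (x : ℕ → ℝ) : Prop := Summable (fun n => |x n| ^ p)

/-- The `ℓ_p` norm. -/
noncomputable def lpNorm (p : ℝ) (x : ℕ → ℝ) : ℝ := (∑' n, |x n| ^ p) ^ (1 / p)

lemma supNorm_nonneg (x : ℕ → ℝ) : 0 ≤ supNorm x :=
  Real.iSup_nonneg fun n => abs_nonneg _

lemma le_supNorm {x : ℕ → ℝ} (h : IsBdd x) (n : ℕ) : |x n| ≤ supNorm x := by
  obtain ⟨C, hC⟩ := h
  exact le_ciSup ⟨C, by rintro _ ⟨m, rfl⟩; exact hC m⟩ n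

lemma supNorm_le {x : ℕ → ℝ} {C : ℝ} (h : ∀ n, |x n| ≤ C) : supNorm x ≤ C :=
  ciSup_le h

lemma memlp_le_lpNorm {p : ℝ} (hp : 1 ≤ p) {x : ℕ → ℝ} (hx : Memlp p x) (n : ℕ) :
    |x n| ≤ lpNorm p x := by
  have hp0 : 0 < p := lt_of_lt_of_le one_pos hp
  have h1 : |x n| ^ p ≤ ∑' m, |x m| ^ p :=
    Summable.le_tsum hx n fun m _ => Real.rpow_nonneg (abs_nonneg _) _
  have h2 : (|x n| ^ p) ^ (1/p) ≤ (∑' m, |x m| ^ p) ^ (1/p) :=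
    Real.rpow_le_rpow (Real.rpow_nonneg (abs_nonneg _) _) h1 (by positivity)
  rwa [one_div, Real.rpow_rpow_inv (abs_nonneg _) hp0.ne', ← one_div] at h2

lemma memlp_bdd {p : ℝ} (hp : 1 ≤ p) {x : ℕ → ℝ} (hx : Memlp p x) : IsBdd x :=
  ⟨lpNorm p x, memlp_le_lpNorm hp hx⟩

lemma rpow_add_le {a b p : ℝ} (ha : 0 ≤ a) (hb : 0 ≤ b) (hp : 0 ≤ p) :
    (a + b) ^ p ≤ 2 ^ p * (a ^ p + b ^ p) := by
  have h1 : a + b ≤ 2 * max a b := by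
    rcases le_total a b with h | h
    · simp [max_eq_right h]; linarith
    · simp [max_eq_left h]; linarith
  have h2 : (a + b) ^ p ≤ (2 * max a b) ^ p :=
    Real.rpow_le_rpow (by linarith) h1 hp
  have h3 : (2 * max a b) ^ p = 2 ^ p * (max a b) ^ p :=
    Real.mul_rpow (by norm_num) (le_max_of_le_left ha)
  have h4 : (max a b) ^ p ≤ a ^ p + b ^ p := by
    rcases le_total a b with h | h
    · rw [max_eq_right h]; nlinarith [Real.rpow_nonneg ha p]
    · rw [max_eq_left h]; nlinarith [Real.rpow_nonneg hb p]
  calc (a + b) ^ p ≤ 2 ^ p * (max a b) ^ p := by rw [← h3]; exact h2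
    _ ≤ 2 ^ p * (a ^ p + b ^ p) := by
        have : (0:ℝ) ≤ 2 ^ p := Real.rpow_nonneg (by norm_num) p
        nlinarith

lemma memlp_add {p : ℝ} (hp : 0 ≤ p) {x y : ℕ → ℝ} (hx : Memlp p x) (hy : Memlp p y) :
    Memlp p (fun n => x n + y n) := by
  refine Summable.of_nonneg_of_le (fun n => Real.rpow_nonneg (abs_nonneg _) _)
    (fun n => ?_) ((hx.add hy).mul_left (2^p))
  calc |x n + y n| ^ p ≤ (|x n| + |y n|) ^ p :=
          Real.rpow_le_rpow (abs_nonneg _) (abs_add_le _ _) hp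
      _ ≤ 2 ^ p * (|x n| ^ p + |y n| ^ p) := rpow_add_le (abs_nonneg _) (abs_nonneg _) hp

lemma memlp_neg {p : ℝ} {x : ℕ → ℝ} (hx : Memlp p x) : Memlp p (fun n => - x n) := by
  simpa [Memlp, abs_neg] using hx

variable {T : (ℕ → ℝ) →ₗ[ℝ] (ℕ → ℝ)}

lemma iter_add (k : ℕ) (x y : ℕ → ℝ) : (⇑T)^[k] (x + y) = (⇑T)^[k] x + (⇑T)^[k] y := by
  induction k generalizing x y with
  | zero => simp
  | succ k ih =>
    rw [Function.iterate_succ_apply, Function.iterate_succ_apply,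
      Function.iterate_succ_apply, map_add, ih]

lemma iter_smul (k : ℕ) (c : ℝ) (x : ℕ → ℝ) : (⇑T)^[k] (c • x) = c • (⇑T)^[k] x := by
  induction k generalizing x with
  | zero => simp
  | succ k ih =>
    rw [Function.iterate_succ_apply, Function.iterate_succ_apply, map_smul, ih]

lemma cesaro_add (n : ℕ) (x y : ℕ → ℝ) (s : ℕ) :
    cesaro T n (x + y) s = cesaro T n x s + cesaro T n y s := by
  simp only [cesaro, iter_add]
  rw [← add_div, ← Finset.sum_add_distrib]
  simp

lemma cesaro_smul (n : ℕ) (c : ℝ) (x : ℕ → ℝ) (s : ℕ) :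
    cesaro T n (c • x) s = c * cesaro T n x s := by
  simp only [cesaro, iter_smul, Pi.smul_apply, smul_eq_mul]
  rw [← Finset.mul_sum, mul_div_assoc]

lemma iter_bdd (hT : IsDS T) (k : ℕ) {x : ℕ → ℝ} (hx : IsBdd x) :
    IsBdd ((⇑T)^[k] x) ∧ supNorm ((⇑T)^[k] x) ≤ supNorm x := by
  induction k with
  | zero => simp only [Function.iterate_zero_apply]; exact ⟨hx, le_rfl⟩
  | succ k ih =>
    simp only [Function.iterate_succ_apply']
    obtain ⟨h1, h2⟩ := ih
    obtain ⟨h3, h4⟩ := hT.2 _ h1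
    exact ⟨h3, h4.trans h2⟩

lemma iter_summ (hT : IsDS T) (k : ℕ) {x : ℕ → ℝ} (hx : Summable (fun s => |x s|)) :
    Summable (fun s => |(⇑T)^[k] x s|) ∧ ∑' s, |(⇑T)^[k] x s| ≤ ∑' s, |x s| := by
  induction k with
  | zero => simp only [Function.iterate_zero_apply]; exact ⟨hx, le_rfl⟩
  | succ k ih =>
    obtain ⟨h1, h2⟩ := ih
    obtain ⟨h3, h4⟩ := hT.1 _ h1
    simp only [Function.iterate_succ_apply']
    exact ⟨h3, h4.trans h2⟩

lemma cesaro_pt_le (hT : IsDS T) (n : ℕ) {x : ℕ → ℝ} (hx : IsBdd x) (s : ℕ) :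
    |cesaro T n x s| ≤ supNorm x := by
  rcases Nat.eq_zero_or_pos n with rfl | hn
  · simpa [cesaro] using supNorm_nonneg x
  have h1 : |∑ k ∈ Finset.range n, (⇑T)^[k] x s| ≤ (n:ℝ) * supNorm x := by
    refine (Finset.abs_sum_le_sum_abs _ _).trans ?_
    calc ∑ k ∈ Finset.range n, |(⇑T)^[k] x s| ≤ ∑ _k ∈ Finset.range n, supNorm x :=
          Finset.sum_le_sum fun k _ => (le_supNorm (iter_bdd hT k hx).1 s).trans
            (iter_bdd hT k hx).2
      _ = (n:ℝ) * supNorm x := by simp [mul_comm]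
  rw [cesaro, abs_div, Nat.abs_cast,
    div_le_iff₀ (by exact_mod_cast hn : (0:ℝ) < (n:ℝ))]
  linarith [h1]

lemma cesaro_bdd (hT : IsDS T) (n : ℕ) {x : ℕ → ℝ} (hx : IsBdd x) :
    IsBdd (cesaro T n x) := ⟨supNorm x, cesaro_pt_le hT n hx⟩

lemma cesaro_supNorm_le (hT : IsDS T) (n : ℕ) {x : ℕ → ℝ} (hx : IsBdd x) :
    supNorm (cesaro T n x) ≤ supNorm x := supNorm_le (cesaro_pt_le hT n hx)

lemma cesaro_summ (hT : IsDS T) (n : ℕ) {x : ℕ → ℝ} (hx : Summable (fun s => |x s|)) :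
    Summable (fun s => |cesaro T n x s|) ∧ ∑' s, |cesaro T n x s| ≤ ∑' s, |x s| := by
  rcases Nat.eq_zero_or_pos n with rfl | hn
  · refine ⟨by simpa [cesaro] using summable_zero, ?_⟩
    simp only [cesaro, Finset.range_zero, Finset.sum_empty, Nat.cast_zero, zero_div,
      abs_zero, tsum_zero]
    exact tsum_nonneg fun s => abs_nonneg _
  have hsumk : ∀ k, Summable (fun s => |(⇑T)^[k] x s|) := fun k => (iter_summ hT k hx).1
  have hmajsum : Summable (fun s => (∑ k ∈ Finset.range n, |(⇑T)^[k] x s|) / n) := by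
    apply Summable.div_const
    exact summable_sum fun k _ => hsumk k
  have hmaj : ∀ s, |cesaro T n x s| ≤ (∑ k ∈ Finset.range n, |(⇑T)^[k] x s|) / n := by
    intro s
    rw [cesaro, abs_div, Nat.abs_cast]
    gcongr
    exact Finset.abs_sum_le_sum_abs _ _
  have hsummable : Summable (fun s => |cesaro T n x s|) :=
    Summable.of_nonneg_of_le (fun s => abs_nonneg _) hmaj hmajsum
  refine ⟨hsummable, ?_⟩
  calc ∑' s, |cesaro T n x s| ≤ ∑' s, (∑ k ∈ Finset.range n, |(⇑T)^[k] x s|) / n :=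
        Summable.tsum_le_tsum hmaj hsummable hmajsum
    _ = (∑ k ∈ Finset.range n, ∑' s, |(⇑T)^[k] x s|) / n := by
        rw [tsum_div_const, Summable.tsum_finsetSum fun k _ => hsumk k]
    _ ≤ ((n:ℝ) * ∑' s, |x s|) / n := by
        gcongr
        calc ∑ k ∈ Finset.range n, ∑' s, |(⇑T)^[k] x s|
            ≤ ∑ _k ∈ Finset.range n, ∑' s, |x s| :=
              Finset.sum_le_sum fun k _ => (iter_summ hT k hx).2
          _ = (n:ℝ) * ∑' s, |x s| := by simp [mul_comm]
    _ = ∑' s, |x s| := by field_simp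

open MeasureTheory in
lemma lint_meas (p a : ℝ) :
    Measurable (fun t : ℝ => ENNReal.ofReal (max (a - t) 0 * (p * (p-1) * t ^ (p-2)))) := by
  apply Measurable.ennreal_ofReal
  apply Measurable.mul
  · fun_prop
  · exact Measurable.const_mul (measurable_id.pow_const _) _

open MeasureTheory in
lemma rpow_eq_lintegral {p : ℝ} (hp : 1 < p) {a : ℝ} (ha : 0 ≤ a) :
    ∫⁻ t in Set.Ioi (0:ℝ), ENNReal.ofReal (max (a - t) 0 * (p * (p-1) * t ^ (p-2)))
      = ENNReal.ofReal (a ^ p) := by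
  rcases eq_or_lt_of_le ha with rfl | ha'
  · rw [Real.zero_rpow (by linarith), ENNReal.ofReal_zero]
    rw [setLIntegral_congr_fun measurableSet_Ioi
      (fun t (ht : 0 < t) => ?_), lintegral_zero]
    have : max (0 - t) 0 = 0 := max_eq_right (by linarith)
    rw [this, zero_mul, ENNReal.ofReal_zero]
  -- a > 0
  have hsplit : Set.Ioc (0:ℝ) a ∪ Set.Ioi a = Set.Ioi 0 := Set.Ioc_union_Ioi_eq_Ioi (le_of_lt ha')
  rw [← hsplit, lintegral_union measurableSet_Ioi (Set.Ioc_disjoint_Ioi le_rfl)]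
  have h2 : ∫⁻ t in Set.Ioi a, ENNReal.ofReal (max (a - t) 0 * (p * (p-1) * t ^ (p-2))) = 0 := by
    rw [setLIntegral_congr_fun measurableSet_Ioi
      (fun t (ht : a < t) => ?_), lintegral_zero]
    have : max (a - t) 0 = 0 := max_eq_right (by linarith)
    rw [this, zero_mul, ENNReal.ofReal_zero]
  rw [h2, add_zero]
  set c : ℝ := p * (p-1) with hc
  have hcpos : 0 < c := by rw [hc]; nlinarith
  set g : ℝ → ℝ := fun t => (a - t) * (c * t ^ (p-2)) with hg
  have hEq : ∀ t ∈ Set.Icc (0:ℝ) a, g t = c * (a * t ^ (p-2)) - c * t ^ (p-1) := by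
    intro t ht
    have key : t ^ (p-1) = t ^ (p-2) * t := by
      rcases eq_or_lt_of_le ht.1 with rfl | ht0
      · simp [Real.zero_rpow (show p - 1 ≠ 0 from ne_of_gt (by linarith))]
      · rw [← Real.rpow_add_one (ne_of_gt ht0) (p-2)]
        congr 1; ring
    rw [hg]; simp only []
    rw [key]; ring
  have hii : IntervalIntegrable (fun t : ℝ => c * (a * t ^ (p-2)) - c * t ^ (p-1)) volume 0 a := by
    have i1 : IntervalIntegrable (fun t : ℝ => t ^ (p-2)) volume 0 a :=
      intervalIntegral.intervalIntegrable_rpow' (by linarith)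
    have i2 : IntervalIntegrable (fun t : ℝ => t ^ (p-1)) volume 0 a :=
      intervalIntegral.intervalIntegrable_rpow' (by linarith)
    exact ((i1.const_mul a).const_mul c).sub (i2.const_mul c)
  have hint : IntegrableOn g (Set.Ioc 0 a) := by
    rw [show Set.Ioc (0:ℝ) a = Set.Ioc 0 a from rfl]
    have h1 : IntegrableOn (fun t : ℝ => c * (a * t ^ (p-2)) - c * t ^ (p-1)) (Set.Ioc 0 a) :=
      (intervalIntegrable_iff_integrableOn_Ioc_of_le (le_of_lt ha')).mp hii
    exact h1.congr_fun (fun t ht => (hEq t (Set.Ioc_subset_Icc_self ht)).symm) measurableSet_Ioc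
  have hval : ∫ t in Set.Ioc (0:ℝ) a, g t = a ^ p := by
    rw [← intervalIntegral.integral_of_le (le_of_lt ha'),
      intervalIntegral.integral_congr (g := fun t => c * (a * t ^ (p-2)) - c * t ^ (p-1))
        (fun t ht => hEq t (by rwa [Set.uIcc_of_le (le_of_lt ha')] at ht))]
    have i1 : IntervalIntegrable (fun t : ℝ => t ^ (p-2)) volume 0 a :=
      intervalIntegral.intervalIntegrable_rpow' (by linarith)
    have i2 : IntervalIntegrable (fun t : ℝ => t ^ (p-1)) volume 0 a :=
      intervalIntegral.intervalIntegrable_rpow' (by linarith)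
    rw [intervalIntegral.integral_sub ((i1.const_mul a).const_mul c) (i2.const_mul c),
      intervalIntegral.integral_const_mul, intervalIntegral.integral_const_mul,
      intervalIntegral.integral_const_mul,
      integral_rpow (Or.inl (by linarith)), integral_rpow (Or.inl (by linarith))]
    have e1 : p - 2 + 1 = p - 1 := by ring
    have e2 : p - 1 + 1 = p := by ring
    rw [e1, e2, Real.zero_rpow (show p - 1 ≠ 0 from ne_of_gt (by linarith)),
      Real.zero_rpow (show p ≠ 0 from ne_of_gt (by linarith))]
    have e3 : a * a ^ (p-1) = a ^ p := by
      rw [mul_comm, ← Real.rpow_add_one (ne_of_gt ha')]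
      norm_num
    rw [hc]
    field_simp
    rw [sub_zero, sub_zero, mul_assoc p a, e3]
    have hp1 : p - 1 ≠ 0 := ne_of_gt (by linarith)
    field_simp
    ring
  have hcong : ∫⁻ t in Set.Ioc (0:ℝ) a, ENNReal.ofReal (max (a - t) 0 * (c * t ^ (p-2)))
      = ∫⁻ t in Set.Ioc (0:ℝ) a, ENNReal.ofReal (g t) := by
    apply setLIntegral_congr_fun measurableSet_Ioc
    refine fun t ht => ?_
    rw [hg]; simp only []
    rw [max_eq_left (by linarith [ht.2] : (0:ℝ) ≤ a - t)]
  rw [hcong, ← MeasureTheory.ofReal_integral_eq_lintegral_ofReal hint ?pos, hval]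
  case pos =>
    rw [Filter.EventuallyLE, ae_restrict_iff' measurableSet_Ioc]
    refine ae_of_all _ fun t ht => ?_
    have : (0:ℝ) ≤ t ^ (p-2) := Real.rpow_nonneg (le_of_lt ht.1) _
    have : (0:ℝ) ≤ a - t := by linarith [ht.2]
    simp only [hg, Pi.zero_apply]
    positivity

lemma max_sub_bound {p t : ℝ} (hp : 1 ≤ p) (ht : 0 < t) (a : ℝ) (ha : 0 ≤ a) :
    max (a - t) 0 ≤ t ^ (1-p) * a ^ p := by
  rcases le_total a t with h | h
  · rw [max_eq_right (by linarith)]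
    positivity
  · rw [max_eq_left (by linarith)]
    have h0 : 0 < a := lt_of_lt_of_le ht h
    have key : a = a ^ p * a ^ (1-p) := by
      rw [← Real.rpow_add h0]; norm_num
    calc a - t ≤ a := by linarith
      _ = a ^ p * a ^ (1-p) := key
      _ ≤ a ^ p * t ^ (1-p) :=
          mul_le_mul_of_nonneg_left (Real.rpow_le_rpow_of_nonpos ht h (by linarith))
            (Real.rpow_nonneg (le_of_lt h0) _)
      _ = t ^ (1-p) * a ^ p := mul_comm _ _

lemma maxsub_summable {p t : ℝ} (hp : 1 ≤ p) (ht : 0 < t) {y : ℕ → ℝ} (hy : Memlp p y) :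
    Summable (fun s => max (|y s| - t) 0) := by
  refine Summable.of_nonneg_of_le (fun s => le_max_right _ _)
    (fun s => max_sub_bound hp ht _ (abs_nonneg _)) (hy.mul_left _)

lemma lemA {p : ℝ} (hp : 1 ≤ p) (S : (ℕ → ℝ) → (ℕ → ℝ))
    (hadd : ∀ u v : ℕ → ℝ, S (u + v) = S u + S v)
    (h1 : ∀ u : ℕ → ℝ, Summable (fun s => |u s|) →
        Summable (fun s => |S u s|) ∧ ∑' s, |S u s| ≤ ∑' s, |u s|)
    (hinf : ∀ u : ℕ → ℝ, IsBdd u → IsBdd (S u) ∧ supNorm (S u) ≤ supNorm u)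
    {y : ℕ → ℝ} (hy : Memlp p y) (F : Finset ℕ) :
    ∑ s ∈ F, |S y s| ^ p ≤ ∑' s, |y s| ^ p := by
  have star : ∀ t : ℝ, 0 < t →
      ∑ s ∈ F, max (|S y s| - t) 0 ≤ ∑' s, max (|y s| - t) 0 := by
    intro t ht
    set v : ℕ → ℝ := fun s => max (-t) (min t (y s)) with hv
    set u : ℕ → ℝ := fun s => y s - v s with hu
    have huv : u + v = y := by
      funext s; simp [hu]
    have hvb : ∀ s, |v s| ≤ t := by
      intro s
      rw [abs_le]
      constructor
      · exact le_max_left _ _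
      · exact max_le (by linarith) (min_le_left _ _)
    have hub : ∀ s, |u s| ≤ max (|y s| - t) 0 := by
      intro s
      simp only [hu, hv]
      rcases le_total (y s) t with h1' | h1'
      · rcases le_total (-t) (y s) with h2' | h2'
        · rw [min_eq_right h1', max_eq_right h2']
          simp
        · rw [min_eq_right h1', max_eq_left h2']
          have hy0 : |y s| = -(y s) := abs_of_nonpos (by linarith)
          have : |y s - -t| = -(y s) - t := by
            rw [abs_of_nonpos (by linarith)]; ring
          rw [this, hy0]
          exact le_max_left _ _
      · rw [min_eq_left h1', max_eq_right (by linarith)]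
        have hy0 : |y s| = y s := abs_of_nonneg (by linarith)
        have : |y s - t| = y s - t := abs_of_nonneg (by linarith)
        rw [this, hy0]
        exact le_max_left _ _
    have hmax_sum : Summable (fun s => max (|y s| - t) 0) := maxsub_summable hp ht hy
    have hu_sum : Summable (fun s => |u s|) :=
      Summable.of_nonneg_of_le (fun s => abs_nonneg _) hub hmax_sum
    obtain ⟨hSu_sum, hSu_le⟩ := h1 u hu_sum
    have hSv : ∀ s, |S v s| ≤ t := by
      intro s
      have hb : IsBdd v := ⟨t, hvb⟩
      obtain ⟨hb1, hb2⟩ := hinf v hb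
      exact (le_supNorm hb1 s).trans (hb2.trans (supNorm_le hvb))
    have hpt : ∀ s, max (|S y s| - t) 0 ≤ |S u s| := by
      intro s
      have hS : S y = S u + S v := by rw [← huv, hadd]
      have : |S y s| ≤ |S u s| + t := by
        calc |S y s| = |S u s + S v s| := by rw [hS]; rfl
          _ ≤ |S u s| + |S v s| := abs_add_le _ _
          _ ≤ |S u s| + t := by linarith [hSv s]
      exact max_le (by linarith) (abs_nonneg _)
    calc ∑ s ∈ F, max (|S y s| - t) 0 ≤ ∑ s ∈ F, |S u s| := Finset.sum_le_sum fun s _ => hpt s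
      _ ≤ ∑' s, |S u s| := Summable.sum_le_tsum F (fun s _ => abs_nonneg _) hSu_sum
      _ ≤ ∑' s, |u s| := hSu_le
      _ ≤ ∑' s, max (|y s| - t) 0 := Summable.tsum_le_tsum hub hu_sum hmax_sum
  -- case split on p
  rcases eq_or_lt_of_le hp with hp1 | hp1
  · -- p = 1
    subst hp1
    have hsum : Summable fun s => |y s| := by
      have := hy
      simpa [Memlp, Real.rpow_one] using this
    obtain ⟨hS1, hS2⟩ := h1 y hsum
    simp only [Real.rpow_one]
    calc ∑ s ∈ F, |S y s| ≤ ∑' s, |S y s| := Summable.sum_le_tsum F (fun s _ => abs_nonneg _) hS1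
      _ ≤ ∑' s, |y s| := hS2
  -- 1 < p
  open MeasureTheory in
  have key1 : ∀ a : ℝ, 0 ≤ a →
      ∫⁻ t in Set.Ioi (0:ℝ), ENNReal.ofReal (max (a - t) 0 * (p * (p-1) * t ^ (p-2)))
        = ENNReal.ofReal (a ^ p) := fun a ha => rpow_eq_lintegral hp1 ha
  have hwt : ∀ t : ℝ, 0 < t → 0 ≤ p * (p-1) * t ^ (p-2) := by
    intro t ht
    have h2 : (0:ℝ) ≤ t ^ (p-2) := Real.rpow_nonneg (le_of_lt ht) _
    have h3 : (0:ℝ) ≤ p * (p-1) := by nlinarith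
    exact mul_nonneg h3 h2
  have chain : ENNReal.ofReal (∑ s ∈ F, |S y s| ^ p) ≤ ENNReal.ofReal (∑' s, |y s| ^ p) := by
    calc ENNReal.ofReal (∑ s ∈ F, |S y s| ^ p)
        = ∑ s ∈ F, ENNReal.ofReal (|S y s| ^ p) :=
          ENNReal.ofReal_sum_of_nonneg fun s _ => Real.rpow_nonneg (abs_nonneg _) _
      _ = ∑ s ∈ F, ∫⁻ t in Set.Ioi (0:ℝ),
            ENNReal.ofReal (max (|S y s| - t) 0 * (p * (p-1) * t ^ (p-2))) := by
          exact Finset.sum_congr rfl fun s _ => (key1 _ (abs_nonneg _)).symm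
      _ = ∫⁻ t in Set.Ioi (0:ℝ), ∑ s ∈ F,
            ENNReal.ofReal (max (|S y s| - t) 0 * (p * (p-1) * t ^ (p-2))) :=
          (MeasureTheory.lintegral_finset_sum F fun s _ => lint_meas p _).symm
      _ ≤ ∫⁻ t in Set.Ioi (0:ℝ), ∑' s,
            ENNReal.ofReal (max (|y s| - t) 0 * (p * (p-1) * t ^ (p-2))) := by
          refine MeasureTheory.setLIntegral_mono (Measurable.ennreal_tsum fun s => lint_meas p _)
            fun t ht => ?_
          have ht0 : (0:ℝ) < t := ht
          have hmax_sum : Summable (fun s => max (|y s| - t) 0) := maxsub_summable hp ht0 hy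
          calc ∑ s ∈ F, ENNReal.ofReal (max (|S y s| - t) 0 * (p * (p-1) * t ^ (p-2)))
              = ENNReal.ofReal (∑ s ∈ F, max (|S y s| - t) 0 * (p * (p-1) * t ^ (p-2))) :=
                (ENNReal.ofReal_sum_of_nonneg fun s _ =>
                  mul_nonneg (le_max_right _ _) (hwt t ht0)).symm
            _ ≤ ENNReal.ofReal (∑' s, max (|y s| - t) 0 * (p * (p-1) * t ^ (p-2))) := by
                apply ENNReal.ofReal_le_ofReal
                rw [← Finset.sum_mul, tsum_mul_right]
                exact mul_le_mul_of_nonneg_right (star t ht0) (hwt t ht0)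
            _ = ∑' s, ENNReal.ofReal (max (|y s| - t) 0 * (p * (p-1) * t ^ (p-2))) :=
                ENNReal.ofReal_tsum_of_nonneg
                  (fun s => mul_nonneg (le_max_right _ _) (hwt t ht0))
                  (hmax_sum.mul_right _)
      _ = ∑' s, ∫⁻ t in Set.Ioi (0:ℝ),
            ENNReal.ofReal (max (|y s| - t) 0 * (p * (p-1) * t ^ (p-2))) :=
          MeasureTheory.lintegral_tsum fun s => (lint_meas p _).aemeasurable
      _ = ∑' s, ENNReal.ofReal (|y s| ^ p) :=
          tsum_congr fun s => key1 _ (abs_nonneg _)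
      _ = ENNReal.ofReal (∑' s, |y s| ^ p) :=
          (ENNReal.ofReal_tsum_of_nonneg (fun s => Real.rpow_nonneg (abs_nonneg _) _) hy).symm
  exact (ENNReal.ofReal_le_ofReal_iff (tsum_nonneg fun s => Real.rpow_nonneg (abs_nonneg _) _)).mp
    chain

lemma isBdd_sub {u w : ℕ → ℝ} (hu : IsBdd u) (hw : IsBdd w) : IsBdd (fun s => u s - w s) := by
  obtain ⟨C, hC⟩ := hu; obtain ⟨D, hD⟩ := hw
  exact ⟨C + D, fun s => (abs_sub _ _).trans (add_le_add (hC s) (hD s))⟩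

lemma cesaro_lp (hT : IsDS T) {p : ℝ} (hp : 1 ≤ p) (n : ℕ) {x : ℕ → ℝ} (hx : Memlp p x)
    (F : Finset ℕ) : ∑ s ∈ F, |cesaro T n x s| ^ p ≤ ∑' s, |x s| ^ p :=
  lemA hp (cesaro T n) (fun u v => funext (cesaro_add n u v))
    (fun u hu => cesaro_summ hT n hu)
    (fun u hu => ⟨cesaro_bdd hT n hu, cesaro_supNorm_le hT n hu⟩) hx F

lemma lpNorm_nonneg (p : ℝ) (x : ℕ → ℝ) : 0 ≤ lpNorm p x :=
  Real.rpow_nonneg (tsum_nonneg fun s => Real.rpow_nonneg (abs_nonneg _) _) _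

lemma lpNorm_rpow {p : ℝ} (hp : 1 ≤ p) {x : ℕ → ℝ} :
    (lpNorm p x) ^ p = ∑' s, |x s| ^ p := by
  have hp0 : p ≠ 0 := ne_of_gt (by linarith)
  rw [lpNorm, one_div, Real.rpow_inv_rpow
    (tsum_nonneg fun s => Real.rpow_nonneg (abs_nonneg _) _) hp0]

open Filter Topology in
theorem stmt7' (T : (ℕ → ℝ) →ₗ[ℝ] (ℕ → ℝ)) (hT : IsDS T) (p : ℝ) (hp : 1 ≤ p) :
    (∀ x y : ℕ → ℝ,
        (Memlp p x ∧ ∃ x' : ℕ → ℝ, Memlp p x' ∧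
          Tendsto (fun n => supNorm (fun s => cesaro T n x s - x' s)) atTop (nhds 0)) →
        (Memlp p y ∧ ∃ y' : ℕ → ℝ, Memlp p y' ∧
          Tendsto (fun n => supNorm (fun s => cesaro T n y s - y' s)) atTop (nhds 0)) →
        (Memlp p (x + y) ∧ ∃ z' : ℕ → ℝ, Memlp p z' ∧
          Tendsto (fun n => supNorm (fun s => cesaro T n (x + y) s - z' s)) atTop (nhds 0))) ∧
    (∀ (c : ℝ) (x : ℕ → ℝ),
        (Memlp p x ∧ ∃ x' : ℕ → ℝ, Memlp p x' ∧
          Tendsto (fun n => supNorm (fun s => cesaro T n x s - x' s)) atTop (nhds 0)) →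
        (Memlp p (c • x) ∧ ∃ z' : ℕ → ℝ, Memlp p z' ∧
          Tendsto (fun n => supNorm (fun s => cesaro T n (c • x) s - z' s)) atTop (nhds 0))) ∧
    (∀ (x : ℕ → ℝ) (f : ℕ → (ℕ → ℝ)), Memlp p x →
        (∀ k, Memlp p (f k) ∧ ∃ x' : ℕ → ℝ, Memlp p x' ∧
          Tendsto (fun n => supNorm (fun s => cesaro T n (f k) s - x' s)) atTop (nhds 0)) →
        Tendsto (fun k => lpNorm p (fun n => f k n - x n)) atTop (nhds 0) →
        (Memlp p x ∧ ∃ x' : ℕ → ℝ, Memlp p x' ∧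
          Tendsto (fun n => supNorm (fun s => cesaro T n x s - x' s)) atTop (nhds 0))) := by
  have hp0 : (0:ℝ) ≤ p := by linarith
  refine ⟨?part1, ?part2, ?part3⟩
  case part1 =>
    rintro x y ⟨hx, x', hx', hxc⟩ ⟨hy, y', hy', hyc⟩
    refine ⟨by exact memlp_add hp0 hx hy, fun s => x' s + y' s,
      by simpa using memlp_add hp0 hx' hy', ?_⟩
    have key : ∀ n, supNorm (fun s => cesaro T n (x + y) s - (x' s + y' s)) ≤
        supNorm (fun s => cesaro T n x s - x' s) + supNorm (fun s => cesaro T n y s - y' s) := by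
      intro n
      apply supNorm_le
      intro s
      have b1 : IsBdd (fun s => cesaro T n x s - x' s) :=
        isBdd_sub (cesaro_bdd hT n (memlp_bdd hp hx)) (memlp_bdd hp hx')
      have b2 : IsBdd (fun s => cesaro T n y s - y' s) :=
        isBdd_sub (cesaro_bdd hT n (memlp_bdd hp hy)) (memlp_bdd hp hy')
      calc |cesaro T n (x + y) s - (x' s + y' s)|
          = |(cesaro T n x s - x' s) + (cesaro T n y s - y' s)| := by
            rw [cesaro_add]; ring_nf
        _ ≤ |cesaro T n x s - x' s| + |cesaro T n y s - y' s| := abs_add_le _ _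
        _ ≤ _ := add_le_add (le_supNorm b1 s) (le_supNorm b2 s)
    have := hxc.add hyc
    rw [add_zero] at this
    exact squeeze_zero (fun n => supNorm_nonneg _) key this
  case part2 =>
    rintro c x ⟨hx, x', hx', hxc⟩
    have hmem : Memlp p (c • x) := by
      have : Summable (fun n => |c| ^ p * |x n| ^ p) := hx.mul_left _
      refine Summable.of_nonneg_of_le (fun n => Real.rpow_nonneg (abs_nonneg _) _)
        (fun n => ?_) this
      show |(c • x) n| ^ p ≤ _
      rw [Pi.smul_apply, smul_eq_mul, abs_mul, Real.mul_rpow (abs_nonneg _) (abs_nonneg _)]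
    have hmem' : Memlp p (fun s => c * x' s) := by
      have : Summable (fun n => |c| ^ p * |x' n| ^ p) := hx'.mul_left _
      refine Summable.of_nonneg_of_le (fun n => Real.rpow_nonneg (abs_nonneg _) _)
        (fun n => ?_) this
      rw [abs_mul, Real.mul_rpow (abs_nonneg _) (abs_nonneg _)]
    refine ⟨hmem, fun s => c * x' s, hmem', ?_⟩
    have key : ∀ n, supNorm (fun s => cesaro T n (c • x) s - c * x' s) ≤
        |c| * supNorm (fun s => cesaro T n x s - x' s) := by
      intro n
      apply supNorm_le
      intro s
      have b1 : IsBdd (fun s => cesaro T n x s - x' s) :=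
        isBdd_sub (cesaro_bdd hT n (memlp_bdd hp hx)) (memlp_bdd hp hx')
      calc |cesaro T n (c • x) s - c * x' s| = |c| * |cesaro T n x s - x' s| := by
            rw [cesaro_smul, ← abs_mul]; ring_nf
        _ ≤ |c| * supNorm (fun s => cesaro T n x s - x' s) :=
            mul_le_mul_of_nonneg_left (le_supNorm b1 s) (abs_nonneg _)
    have : Tendsto (fun n => |c| * supNorm (fun s => cesaro T n x s - x' s)) atTop (nhds 0) := by
      simpa using hxc.const_mul |c|
    exact squeeze_zero (fun n => supNorm_nonneg _) key this
  case part3 =>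
    rintro x f hx hf hconv
    choose hfmem xk hxkmem hxkconv using hf
    set e : ℕ → ℝ := fun k => lpNorm p (fun n => f k n - x n) with he
    have he0 : ∀ k, 0 ≤ e k := fun k => lpNorm_nonneg p _
    have hdmem : ∀ k, Memlp p (fun n => f k n - x n) := fun k => by
      have := memlp_add hp0 (hfmem k) (memlp_neg hx)
      simpa [sub_eq_add_neg] using this
    have hdble : ∀ k s, |f k s - x s| ≤ e k := fun k s => memlp_le_lpNorm hp (hdmem k) s
    have hsplit : ∀ k, f k = (fun m => f k m - x m) + x := fun k => by funext m; simp
    have hcesd : ∀ k n s, |cesaro T n (f k) s - cesaro T n x s| ≤ e k := by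
      intro k n s
      have h1 : cesaro T n (f k) s = cesaro T n (fun m => f k m - x m) s + cesaro T n x s := by
        conv_lhs => rw [hsplit k]
        exact cesaro_add n _ _ s
      rw [h1, add_sub_cancel_right]
      exact (cesaro_pt_le hT n (memlp_bdd hp (hdmem k)) s).trans (supNorm_le (hdble k))
    have hbd : ∀ k n, IsBdd (fun s => cesaro T n (f k) s - xk k s) := fun k n =>
      isBdd_sub (cesaro_bdd hT n (memlp_bdd hp (hfmem k))) (memlp_bdd hp (hxkmem k))
    have hptconv : ∀ k s, Tendsto (fun n => cesaro T n (f k) s) atTop (nhds (xk k s)) := by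
      intro k s
      rw [tendsto_iff_dist_tendsto_zero]
      refine squeeze_zero (fun n => dist_nonneg) (fun n => ?_) (hxkconv k)
      rw [Real.dist_eq]
      exact le_supNorm (hbd k n) s
    have hxkclose : ∀ k j s, |xk k s - xk j s| ≤ e k + e j := by
      intro k j s
      have key : ∀ n, |xk k s - xk j s| ≤
          supNorm (fun s => cesaro T n (f k) s - xk k s) + (e k + e j)
            + supNorm (fun s => cesaro T n (f j) s - xk j s) := by
        intro n
        have t1 : |cesaro T n (f k) s - xk k s| ≤
            supNorm (fun s => cesaro T n (f k) s - xk k s) := le_supNorm (hbd k n) s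
        have t2 : |cesaro T n (f j) s - xk j s| ≤
            supNorm (fun s => cesaro T n (f j) s - xk j s) := le_supNorm (hbd j n) s
        have mid : |cesaro T n (f k) s - cesaro T n (f j) s| ≤ e k + e j := by
          calc |cesaro T n (f k) s - cesaro T n (f j) s|
              ≤ |cesaro T n (f k) s - cesaro T n x s|
                + |cesaro T n x s - cesaro T n (f j) s| := abs_sub_le _ _ _
            _ ≤ e k + e j := by
                have := hcesd j n s
                rw [abs_sub_comm] at this
                linarith [hcesd k n s]
        calc |xk k s - xk j s|
            ≤ |xk k s - cesaro T n (f k) s| + |cesaro T n (f k) s - xk j s| :=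
              abs_sub_le _ _ _
          _ ≤ |xk k s - cesaro T n (f k) s| + (|cesaro T n (f k) s - cesaro T n (f j) s|
              + |cesaro T n (f j) s - xk j s|) := by linarith [abs_sub_le (cesaro T n (f k) s) (cesaro T n (f j) s) (xk j s)]
          _ ≤ _ := by
              rw [abs_sub_comm (xk k s)] at *
              linarith
      have hlim : Tendsto (fun n => supNorm (fun s => cesaro T n (f k) s - xk k s) + (e k + e j)
            + supNorm (fun s => cesaro T n (f j) s - xk j s)) atTop
          (nhds (0 + (e k + e j) + 0)) :=
        ((hxkconv k).add tendsto_const_nhds).add (hxkconv j)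
      have := ge_of_tendsto' hlim key
      simpa using this
    have hcauchy : ∀ s, ∃ L, Tendsto (fun k => xk k s) atTop (nhds L) := by
      intro s
      refine cauchySeq_tendsto_of_complete ?_
      rw [Metric.cauchySeq_iff']
      intro ε hε
      have hev : ∀ᶠ k in atTop, e k < ε/2 := hconv.eventually (gt_mem_nhds (by linarith))
      obtain ⟨N, hN⟩ := Filter.eventually_atTop.mp hev
      refine ⟨N, fun n hn => ?_⟩
      rw [Real.dist_eq]
      calc |xk n s - xk N s| ≤ e n + e N := hxkclose n N s
        _ < ε := by linarith [hN n hn, hN N le_rfl]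
    choose x' hx' using hcauchy
    have hclose : ∀ k s, |xk k s - x' s| ≤ e k := by
      intro k s
      have hf1 : Tendsto (fun j => |xk k s - xk j s|) atTop (nhds |xk k s - x' s|) :=
        (tendsto_const_nhds.sub (hx' s)).abs
      have hf2 : Tendsto (fun j => e k + e j) atTop (nhds (e k + 0)) :=
        tendsto_const_nhds.add hconv
      have := le_of_tendsto_of_tendsto' hf1 hf2 (fun j => hxkclose k j s)
      simpa using this
    set B := ∑' s, |x s| ^ p with hB
    have hBnn : 0 ≤ B := tsum_nonneg fun s => Real.rpow_nonneg (abs_nonneg _) _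
    have hMk : ∀ k (F : Finset ℕ), ∑ s ∈ F, |xk k s| ^ p ≤ ∑' s, |f k s| ^ p := by
      intro k F
      have hlim : Tendsto (fun n => ∑ s ∈ F, |cesaro T n (f k) s| ^ p) atTop
          (nhds (∑ s ∈ F, |xk k s| ^ p)) :=
        tendsto_finset_sum F fun s _ => ((hptconv k s).abs.rpow_const (Or.inr hp0))
      exact le_of_tendsto hlim (Filter.Eventually.of_forall fun n => cesaro_lp hT hp n (hfmem k) F)
    have hfk : ∀ k, ∑' s, |f k s| ^ p ≤ 2^p * ((e k)^p + B) := by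
      intro k
      have h1 : ∀ s, |f k s| ^ p ≤ 2^p * (|f k s - x s| ^ p + |x s| ^ p) := by
        intro s
        calc |f k s| ^ p = |(f k s - x s) + x s| ^ p := by norm_num
          _ ≤ (|f k s - x s| + |x s|) ^ p :=
              Real.rpow_le_rpow (abs_nonneg _) (abs_add_le _ _) hp0
          _ ≤ 2^p * (|f k s - x s| ^ p + |x s| ^ p) :=
              rpow_add_le (abs_nonneg _) (abs_nonneg _) hp0
      have h2 : Summable (fun s => 2^p * (|f k s - x s| ^ p + |x s| ^ p)) :=
        ((hdmem k).add hx).mul_left _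
      calc ∑' s, |f k s| ^ p ≤ ∑' s, 2^p * (|f k s - x s|^p + |x s|^p) :=
            Summable.tsum_le_tsum h1 (hfmem k) h2
        _ = 2^p * (∑' s, (|f k s - x s|^p + |x s|^p)) := tsum_mul_left
        _ = 2^p * ((e k)^p + B) := by
            rw [Summable.tsum_add (hdmem k) hx, hB, he, lpNorm_rpow hp]
    have h2p : (0:ℝ) ≤ 2^p := Real.rpow_nonneg (by norm_num) _
    have hCbound : ∀ᶠ k in atTop, ∀ F : Finset ℕ, ∑ s ∈ F, |xk k s| ^ p ≤ 2^p * (1 + B) := by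
      have hev : ∀ᶠ k in atTop, e k < 1 := hconv.eventually (gt_mem_nhds (by norm_num))
      filter_upwards [hev] with k hk F
      have hek1 : (e k)^p ≤ 1 := Real.rpow_le_one (he0 k) (le_of_lt hk) hp0
      calc ∑ s ∈ F, |xk k s| ^ p ≤ ∑' s, |f k s| ^ p := hMk k F
        _ ≤ 2^p * ((e k)^p + B) := hfk k
        _ ≤ 2^p * (1 + B) := by nlinarith
    have hx'mem : Memlp p x' := by
      refine summable_of_sum_le (c := 2^p * (1 + B)) (fun s => Real.rpow_nonneg (abs_nonneg _) _) (fun F => ?_)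
      have hlim : Tendsto (fun k => ∑ s ∈ F, |xk k s| ^ p) atTop
          (nhds (∑ s ∈ F, |x' s| ^ p)) :=
        tendsto_finset_sum F fun s _ => ((hx' s).abs.rpow_const (Or.inr hp0))
      exact le_of_tendsto hlim (hCbound.mono fun k hk => hk F)
    refine ⟨hx, x', hx'mem, ?_⟩
    rw [Metric.tendsto_atTop]
    intro ε hε
    have hev : ∀ᶠ k in atTop, e k < ε/3 := hconv.eventually (gt_mem_nhds (by linarith))
    obtain ⟨k, hk⟩ := hev.exists
    obtain ⟨N, hN⟩ := Metric.tendsto_atTop.mp (hxkconv k) (ε/3) (by linarith)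
    refine ⟨N, fun n hn => ?_⟩
    have hsupb : supNorm (fun s => cesaro T n (f k) s - xk k s) < ε/3 := by
      have := hN n hn
      rwa [Real.dist_eq, sub_zero, abs_of_nonneg (supNorm_nonneg _)] at this
    rw [Real.dist_eq, sub_zero, abs_of_nonneg (supNorm_nonneg _)]
    have hpt : ∀ s, |cesaro T n x s - x' s| ≤
        e k + supNorm (fun s => cesaro T n (f k) s - xk k s) + e k := by
      intro s
      have t1 : |cesaro T n x s - cesaro T n (f k) s| ≤ e k := by
        rw [abs_sub_comm]; exact hcesd k n s
      have t2 : |cesaro T n (f k) s - xk k s| ≤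
          supNorm (fun s => cesaro T n (f k) s - xk k s) := le_supNorm (hbd k n) s
      have t3 : |xk k s - x' s| ≤ e k := hclose k s
      calc |cesaro T n x s - x' s|
          ≤ |cesaro T n x s - xk k s| + |xk k s - x' s| := abs_sub_le _ _ _
        _ ≤ (|cesaro T n x s - cesaro T n (f k) s| + |cesaro T n (f k) s - xk k s|)
            + |xk k s - x' s| := by linarith [abs_sub_le (cesaro T n x s) (cesaro T n (f k) s) (xk k s)]
        _ ≤ _ := by linarith
    calc supNorm (fun s => cesaro T n x s - x' s)
        ≤ e k + supNorm (fun s => cesaro T n (f k) s - xk k s) + e k := supNorm_le hpt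
      _ < ε := by linarith



/-- The set `ℓ_p(T)` of elements of `ℓ_p` whose Cesàro averages converge uniformly to
an element of `ℓ_p` is a closed subspace of `(ℓ_p, ‖·‖_p)`. -/
theorem stmt7 (T : (ℕ → ℝ) →ₗ[ℝ] (ℕ → ℝ)) (hT : IsDS T) (p : ℝ) (hp : 1 ≤ p) :
    (∀ x y : ℕ → ℝ,
        (Memlp p x ∧ ∃ x' : ℕ → ℝ, Memlp p x' ∧
          Tendsto (fun n => supNorm (fun s => cesaro T n x s - x' s)) atTop (nhds 0)) →
        (Memlp p y ∧ ∃ y' : ℕ → ℝ, Memlp p y' ∧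
          Tendsto (fun n => supNorm (fun s => cesaro T n y s - y' s)) atTop (nhds 0)) →
        (Memlp p (x + y) ∧ ∃ z' : ℕ → ℝ, Memlp p z' ∧
          Tendsto (fun n => supNorm (fun s => cesaro T n (x + y) s - z' s)) atTop (nhds 0))) ∧
    (∀ (c : ℝ) (x : ℕ → ℝ),
        (Memlp p x ∧ ∃ x' : ℕ → ℝ, Memlp p x' ∧
          Tendsto (fun n => supNorm (fun s => cesaro T n x s - x' s)) atTop (nhds 0)) →
        (Memlp p (c • x) ∧ ∃ z' : ℕ → ℝ, Memlp p z' ∧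
          Tendsto (fun n => supNorm (fun s => cesaro T n (c • x) s - z' s)) atTop (nhds 0))) ∧
    (∀ (x : ℕ → ℝ) (f : ℕ → (ℕ → ℝ)), Memlp p x →
        (∀ k, Memlp p (f k) ∧ ∃ x' : ℕ → ℝ, Memlp p x' ∧
          Tendsto (fun n => supNorm (fun s => cesaro T n (f k) s - x' s)) atTop (nhds 0)) →
        Tendsto (fun k => lpNorm p (fun n => f k n - x n)) atTop (nhds 0) →
        (Memlp p x ∧ ∃ x' : ℕ → ℝ, Memlp p x' ∧
          Tendsto (fun n => supNorm (fun s => cesaro T n x s - x' s)) atTop (nhds 0))) :=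
  stmt7' T hT p hp
end

section
/- If T is a Dunford-Schwartz operator on ℓ∞, x ∈ ℓ∞, and the Cesàro averages A(n,T)(x) = (1/n) Σ_{k=0}^{n−1} T^k(x) converge in ℓ∞-norm to x̂, then x̂* ≺ x* in the Hardy-Littlewood-Pólya sense, i.e. Σ_{s=1}^{k} (x̂*)_s ≤ Σ_{s=1}^{k} (x*)_s for every k. -/
open Filter Finset Topology

noncomputable def subSup (x : ℕ → ℝ) (F : Finset ℕ) : ℝ := ⨆ k : {k : ℕ // k ∉ F}, |x k.1|

instance (F : Finset ℕ) : Nonempty {k : ℕ // k ∉ F} := by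
  obtain ⟨a, ha⟩ := F.exists_notMem
  exact ⟨⟨a, ha⟩⟩

lemma rearr_def (x : ℕ → ℝ) (n : ℕ) :
    rearr x n = sInf { r : ℝ | ∃ F : Finset ℕ, F.card ≤ n ∧ r = subSup x F } := rfl

lemma bddAbove_abs {x : ℕ → ℝ} (hx : IsBdd x) : BddAbove (Set.range fun n => |x n|) := by
  obtain ⟨C, hC⟩ := hx
  exact ⟨C, by rintro r ⟨n, rfl⟩; exact hC n⟩

lemma abs_le_supNorm {x : ℕ → ℝ} (hx : IsBdd x) (n : ℕ) : |x n| ≤ supNorm x :=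
  le_ciSup (bddAbove_abs hx) n

lemma subSup_le {x : ℕ → ℝ} {F : Finset ℕ} {C : ℝ} (h : ∀ k ∉ F, |x k| ≤ C) :
    subSup x F ≤ C := ciSup_le fun k => h k.1 k.2

lemma abs_le_subSup {x : ℕ → ℝ} (hx : IsBdd x) {F : Finset ℕ} {k : ℕ} (hk : k ∉ F) :
    |x k| ≤ subSup x F := by
  obtain ⟨C, hC⟩ := hx
  exact le_ciSup (f := fun k : {k : ℕ // k ∉ F} => |x k.1|)
    ⟨C, by rintro r ⟨m, rfl⟩; exact hC m.1⟩ ⟨k, hk⟩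

lemma subSup_nonneg {x : ℕ → ℝ} (hx : IsBdd x) (F : Finset ℕ) : 0 ≤ subSup x F := by
  obtain ⟨a, ha⟩ := F.exists_notMem
  exact le_trans (abs_nonneg (x a)) (abs_le_subSup hx ha)

lemma subSup_le_supNorm {x : ℕ → ℝ} (hx : IsBdd x) (F : Finset ℕ) :
    subSup x F ≤ supNorm x := subSup_le fun k _ => abs_le_supNorm hx k

lemma rearr_le_subSup {x : ℕ → ℝ} (hx : IsBdd x) {F : Finset ℕ} {n : ℕ} (hF : F.card ≤ n) :
    rearr x n ≤ subSup x F := by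
  rw [rearr_def]
  exact csInf_le ⟨0, by rintro r ⟨G, _, rfl⟩; exact subSup_nonneg hx G⟩ ⟨F, hF, rfl⟩

lemma le_rearr {x : ℕ → ℝ} {C : ℝ} {n : ℕ} (h : ∀ F : Finset ℕ, F.card ≤ n → C ≤ subSup x F) :
    C ≤ rearr x n := by
  rw [rearr_def]
  have hne : { r : ℝ | ∃ F : Finset ℕ, F.card ≤ n ∧ r = subSup x F }.Nonempty :=
    ⟨subSup x ∅, ⟨∅, by simp, rfl⟩⟩
  refine le_csInf hne ?_
  rintro r ⟨F, hF, rfl⟩; exact h F hF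

lemma rearr_nonneg {x : ℕ → ℝ} (hx : IsBdd x) (n : ℕ) : 0 ≤ rearr x n :=
  le_rearr fun F _ => subSup_nonneg hx F

lemma rearr_antitone {x : ℕ → ℝ} (hx : IsBdd x) {n m : ℕ} (h : n ≤ m) :
    rearr x m ≤ rearr x n := by
  rw [rearr_def, rearr_def]
  have hne : { r : ℝ | ∃ F : Finset ℕ, F.card ≤ n ∧ r = subSup x F }.Nonempty :=
    ⟨subSup x ∅, ⟨∅, by simp, rfl⟩⟩
  apply csInf_le_csInf ⟨0, by rintro r ⟨G, _, rfl⟩; exact subSup_nonneg hx G⟩ hne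
  rintro r ⟨F, hF, rfl⟩
  exact ⟨F, hF.trans h, rfl⟩

lemma rearr_le_add {y z : ℕ → ℝ} (hy : IsBdd y) (hz : IsBdd z) (n : ℕ) :
    rearr y n ≤ rearr z n + supNorm (fun k => y k - z k) := by
  have key : ∀ F : Finset ℕ, F.card ≤ n →
      rearr y n - supNorm (fun k => y k - z k) ≤ subSup z F := by
    intro F hF
    have h1 : rearr y n ≤ subSup z F + supNorm (fun k => y k - z k) := by
      refine le_trans (rearr_le_subSup hy hF) (subSup_le fun k hk => ?_)
      have : |y k| ≤ |z k| + |y k - z k| := by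
        have := abs_add_le (z k) (y k - z k); simpa [add_sub_cancel] using this
      refine le_trans this (add_le_add (abs_le_subSup hz hk) ?_)
      have hb : IsBdd (fun k => y k - z k) := by
        obtain ⟨C, hC⟩ := hy; obtain ⟨D, hD⟩ := hz
        exact ⟨C + D, fun m => (abs_sub (y m) (z m)).trans (add_le_add (hC m) (hD m))⟩
      exact abs_le_supNorm hb k
    linarith
  have := le_rearr (x := z) key
  linarith

lemma abs_rearr_sub {y z : ℕ → ℝ} (hy : IsBdd y) (hz : IsBdd z) (n : ℕ) :
    |rearr y n - rearr z n| ≤ supNorm (fun k => y k - z k) := by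
  rw [abs_sub_le_iff]
  constructor
  · have := rearr_le_add hy hz n; linarith
  · have := rearr_le_add hz hy n
    have he : supNorm (fun k => z k - y k) = supNorm (fun k => y k - z k) := by
      unfold supNorm; congr 1; funext k; exact abs_sub_comm _ _
    linarith [he ▸ this]

lemma sum_abs_le_sum_rearr {x : ℕ → ℝ} (hx : IsBdd x) (A : Finset ℕ) :
    ∑ n ∈ A, |x n| ≤ ∑ s ∈ Finset.range A.card, rearr x s := by
  induction A using Finset.strongInduction with
  | _ A ih =>
    rcases A.eq_empty_or_nonempty with rfl | hA
    · simp
    obtain ⟨a, haA, hamin⟩ := A.exists_min_image (fun n => |x n|) hA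
    have hcard : A.card = (A.erase a).card + 1 := by
      have := Finset.card_pos.mpr hA
      rw [Finset.card_erase_of_mem haA]; omega
    have hsum : ∑ n ∈ A, |x n| = ∑ n ∈ A.erase a, |x n| + |x a| := by
      exact (Finset.sum_erase_add A _ haA).symm
    have hle : |x a| ≤ rearr x (A.erase a).card := by
      apply le_rearr
      intro F hF
      have : ∃ b ∈ A, b ∉ F := by
        by_contra h
        push_neg at h
        have : A ⊆ F := h
        have := Finset.card_le_card this
        omega
      obtain ⟨b, hbA, hbF⟩ := this
      exact le_trans (hamin b hbA) (abs_le_subSup hx hbF)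
    have ihh := ih (A.erase a) (Finset.erase_ssubset haA)
    rw [hcard, Finset.sum_range_succ]
    calc ∑ n ∈ A, |x n| = ∑ n ∈ A.erase a, |x n| + |x a| := hsum
    _ ≤ ∑ s ∈ Finset.range (A.erase a).card, rearr x s + rearr x (A.erase a).card :=
        add_le_add ihh hle

lemma sum_rearr_le_tsum {y : ℕ → ℝ} (hy : IsBdd y) (hs : Summable fun n => |y n|) (m : ℕ) :
    ∑ s ∈ Finset.range m, rearr y s ≤ ∑' n, |y n| := by
  have key : ∀ ε > (0:ℝ), ∑ s ∈ Finset.range m, rearr y s ≤ ∑' n, |y n| + m * ε := by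
    intro ε hε
    -- greedy construction
    have main : ∀ j : ℕ, ∃ F : Finset ℕ, F.card = j ∧
        ∑ s ∈ Finset.range j, rearr y s ≤ ∑ n ∈ F, |y n| + j * ε := by
      intro j
      induction j with
      | zero => exact ⟨∅, by simp⟩
      | succ j ihj =>
        obtain ⟨F, hFc, hFs⟩ := ihj
        have h1 : rearr y j ≤ subSup y F := rearr_le_subSup hy (le_of_eq hFc)
        have h2 : ∃ n : {k : ℕ // k ∉ F}, subSup y F - ε < |y n.1| := by
          by_contra h
          push_neg at h
          have : subSup y F ≤ subSup y F - ε := subSup_le (fun k hk => h ⟨k, hk⟩)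
          linarith
        obtain ⟨⟨n, hnF⟩, hn⟩ := h2
        refine ⟨insert n F, by rw [Finset.card_insert_of_notMem hnF, hFc], ?_⟩
        rw [Finset.sum_range_succ, Finset.sum_insert hnF]
        push_cast
        have : rearr y j ≤ |y n| + ε := by linarith
        linarith
    obtain ⟨F, hFc, hFs⟩ := main m
    have : ∑ n ∈ F, |y n| ≤ ∑' n, |y n| := hs.sum_le_tsum F (fun n _ => abs_nonneg _)
    linarith
  by_contra h
  push_neg at h
  rcases eq_or_ne m 0 with rfl | hm
  · simp at h
    have : 0 ≤ ∑' n, |y n| := tsum_nonneg (fun n => abs_nonneg (y n)); linarith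
  · set δ := (∑ s ∈ Finset.range m, rearr y s - ∑' n, |y n|) / (2 * m) with hδ
    have hm' : (0:ℝ) < m := by positivity
    have hδpos : 0 < δ := by
      apply div_pos; linarith; positivity
    have := key δ hδpos
    have : (m:ℝ) * δ < ∑ s ∈ Finset.range m, rearr y s - ∑' n, |y n| := by
      rw [hδ]
      rw [mul_div_assoc']
      rw [div_lt_iff₀ (by positivity)]
      ring_nf
      nlinarith [h]
    linarith

lemma decomp {x : ℕ → ℝ} (hx : IsBdd x) (k : ℕ) {ε : ℝ} (hε : 0 < ε) :
    ∃ u v : ℕ → ℝ, x = u + v ∧ Summable (fun n => |u n|) ∧ IsBdd u ∧ IsBdd v ∧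
      ∑' n, |u n| + (k + 1) * supNorm v ≤ ∑ s ∈ Finset.range (k + 1), rearr x s + ε := by
  set δ := ε / (k + 1) with hδdef
  have hδ : 0 < δ := by positivity
  set t := rearr x k + δ with htdef
  have ht : 0 < t := by have := rearr_nonneg hx k; linarith
  have htgt : rearr x k < t := by linarith
  -- the set of large values is finite with at most k elements
  have hfin : {n : ℕ | t < |x n|}.Finite := by
    by_contra h
    have hinf : {n : ℕ | t < |x n|}.Infinite := h
    obtain ⟨F', hF'sub, hF'card⟩ := hinf.exists_subset_card_eq (k + 1)
    have : t ≤ rearr x k := by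
      apply le_rearr
      intro F hF
      have : ∃ b ∈ F', b ∉ F := by
        by_contra hh
        push_neg at hh
        have := Finset.card_le_card (hh : F' ⊆ F)
        omega
      obtain ⟨b, hbF', hbF⟩ := this
      have : t < |x b| := hF'sub hbF'
      exact le_trans this.le (abs_le_subSup hx hbF)
    linarith
  set Af := hfin.toFinset with hAf
  have hAfmem : ∀ n, n ∈ Af ↔ t < |x n| := by intro n; simp [hAf]
  have hAfcard : Af.card ≤ k := by
    by_contra h
    push_neg at h
    have : t ≤ rearr x k := by
      apply le_rearr
      intro F hF
      have : ∃ b ∈ Af, b ∉ F := by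
        by_contra hh
        push_neg at hh
        have := Finset.card_le_card (hh : Af ⊆ F)
        omega
      obtain ⟨b, hbA, hbF⟩ := this
      exact le_trans ((hAfmem b).mp hbA).le (abs_le_subSup hx hbF)
    linarith
  set v : ℕ → ℝ := fun n => max (-t) (min t (x n)) with hv
  set u : ℕ → ℝ := fun n => x n - v n with hu
  have hvb : ∀ n, |v n| ≤ t := by
    intro n
    rw [abs_le]
    constructor
    · exact le_max_left _ _
    · exact max_le (by linarith) (min_le_left _ _)
  have hu0 : ∀ n ∉ Af, u n = 0 := by
    intro n hn
    have : |x n| ≤ t := by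
      by_contra h; exact hn ((hAfmem n).mpr (by push_neg at h; exact h))
    rw [abs_le] at this
    simp only [hu, hv]
    rw [min_eq_right this.2, max_eq_right this.1]
    ring
  have huval : ∀ n ∈ Af, |u n| = |x n| - t := by
    intro n hn
    have hgt : t < |x n| := (hAfmem n).mp hn
    rcases lt_abs.mp hgt with h | h
    · simp only [hu, hv]
      rw [min_eq_left h.le, max_eq_right (by linarith)]
      rw [abs_of_nonneg (by linarith), abs_of_pos (by linarith)]
    · simp only [hu, hv]
      rw [min_eq_right (by linarith), max_eq_left (by linarith)]
      rw [abs_of_nonpos (by linarith), abs_of_neg (by linarith)]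
      ring
  have hsum : Summable (fun n => |u n|) :=
    summable_of_ne_finset_zero (s := Af) (fun n hn => by rw [hu0 n hn, abs_zero])
  have htsum : ∑' n, |u n| = ∑ n ∈ Af, (|x n| - t) := by
    rw [tsum_eq_sum (s := Af) (fun n hn => by rw [hu0 n hn, abs_zero])]
    exact Finset.sum_congr rfl huval
  refine ⟨u, v, by funext n; simp [hu], hsum, ?_, ⟨t, hvb⟩, ?_⟩
  · obtain ⟨C, hC⟩ := hx
    exact ⟨C + t, fun n => by
      have := hvb n
      have := hC n
      have : |u n| ≤ |x n| + |v n| := by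
        simp only [hu]; exact abs_sub _ _
      linarith⟩
  · have hsupv : supNorm v ≤ t := supNorm_le hvb
    have h1 : ∑ n ∈ Af, |x n| ≤ ∑ s ∈ Finset.range Af.card, rearr x s :=
      sum_abs_le_sum_rearr hx Af
    have h2 : ∀ s ∈ Finset.range (k+1), s ∉ Finset.range Af.card → t - δ ≤ rearr x s := by
      intro s hs _
      simp only [Finset.mem_range] at hs
      have : rearr x k ≤ rearr x s := rearr_antitone hx (by omega)
      linarith
    have hsub : Finset.range Af.card ⊆ Finset.range (k+1) :=
      Finset.range_subset_range.mpr (by omega)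
    have h3 : ∑ s ∈ Finset.range Af.card, rearr x s + ((k:ℝ) + 1 - Af.card) * (t - δ)
        ≤ ∑ s ∈ Finset.range (k+1), rearr x s := by
      have hsplit : ∑ s ∈ Finset.range (k+1) \ Finset.range Af.card, rearr x s +
          ∑ s ∈ Finset.range Af.card, rearr x s =
          ∑ s ∈ Finset.range (k+1), rearr x s := Finset.sum_sdiff hsub
      have hcard2 : (Finset.range (k+1) \ Finset.range Af.card).card = k + 1 - Af.card := by
        rw [Finset.card_sdiff_of_subset hsub]; simp
      have hlow : ((k:ℝ) + 1 - Af.card) * (t - δ) ≤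
          ∑ s ∈ Finset.range (k+1) \ Finset.range Af.card, rearr x s := by
        have := Finset.card_nsmul_le_sum (Finset.range (k+1) \ Finset.range Af.card)
          (fun s => rearr x s) (t - δ)
          (fun s hs => h2 s (Finset.mem_sdiff.mp hs).1 (Finset.mem_sdiff.mp hs).2)
        rw [hcard2] at this
        have hcast : ((k + 1 - Af.card : ℕ) : ℝ) = (k:ℝ) + 1 - Af.card := by
          push_cast [Nat.cast_sub (by omega : Af.card ≤ k + 1)]; ring
        calc ((k:ℝ) + 1 - Af.card) * (t - δ) = ((k + 1 - Af.card : ℕ) : ℝ) * (t - δ) := by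
              rw [hcast]
          _ ≤ _ := by simpa [nsmul_eq_mul] using this
      linarith [hsplit]
    have hδeq : ((k:ℝ) + 1) * δ = ε := by
      rw [hδdef]; field_simp
    rw [htsum, Finset.sum_sub_distrib]
    have : ((k:ℝ)+1) * supNorm v ≤ ((k:ℝ)+1) * t := by
      apply mul_le_mul_of_nonneg_left hsupv (by positivity)
    have hconst : ∑ _n ∈ Af, t = (Af.card : ℝ) * t := by
      rw [Finset.sum_const, nsmul_eq_mul]
    nlinarith [h1, h3, hδeq, hδ, Nat.cast_nonneg (α := ℝ) Af.card, hconst,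
      mul_nonneg (Nat.cast_nonneg (α := ℝ) Af.card) hδ.le]

lemma DS_submajor {S : (ℕ → ℝ) →ₗ[ℝ] (ℕ → ℝ)} (hS : IsDS S) {x : ℕ → ℝ} (hx : IsBdd x)
    (k : ℕ) : ∑ s ∈ Finset.range (k+1), rearr (S x) s ≤ ∑ s ∈ Finset.range (k+1), rearr x s := by
  apply le_of_forall_pos_le_add
  intro ε hε
  obtain ⟨u, v, hxuv, husum, hub, hvb, hbound⟩ := decomp hx k hε
  have hSxb : IsBdd (S x) := (hS.2 x hx).1
  have hSub : IsBdd (S u) := (hS.2 u hub).1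
  have hSvb : IsBdd (S v) := (hS.2 v hvb).1
  obtain ⟨hSusum, hSutsum⟩ := hS.1 u husum
  have hSadd : S x = S u + S v := by rw [hxuv, map_add]
  have hdiff : (fun m => S x m - S u m) = S v := by
    funext m; rw [hSadd]; simp
  have h1 : ∀ s, rearr (S x) s ≤ rearr (S u) s + supNorm (S v) := by
    intro s
    have := rearr_le_add hSxb hSub s
    rwa [hdiff] at this
  have h2 : ∑ s ∈ Finset.range (k+1), rearr (S x) s ≤
      ∑ s ∈ Finset.range (k+1), rearr (S u) s + (k+1) * supNorm (S v) := by
    calc ∑ s ∈ Finset.range (k+1), rearr (S x) s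
        ≤ ∑ s ∈ Finset.range (k+1), (rearr (S u) s + supNorm (S v)) :=
          Finset.sum_le_sum fun s _ => h1 s
      _ = ∑ s ∈ Finset.range (k+1), rearr (S u) s + (k+1) * supNorm (S v) := by
          rw [Finset.sum_add_distrib, Finset.sum_const, Finset.card_range, nsmul_eq_mul]
          push_cast; ring
  have h3 : ∑ s ∈ Finset.range (k+1), rearr (S u) s ≤ ∑' n, |S u n| :=
    sum_rearr_le_tsum hSub hSusum (k+1)
  have h4 : supNorm (S v) ≤ supNorm v := (hS.2 v hvb).2
  have h5 : ((k:ℝ)+1) * supNorm (S v) ≤ ((k:ℝ)+1) * supNorm v :=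
    mul_le_mul_of_nonneg_left h4 (by positivity)
  calc ∑ s ∈ Finset.range (k+1), rearr (S x) s
      ≤ ∑ s ∈ Finset.range (k+1), rearr (S u) s + (k+1) * supNorm (S v) := h2
    _ ≤ ∑' n, |S u n| + (k+1) * supNorm v := by push_cast; linarith
    _ ≤ ∑' n, |u n| + (k+1) * supNorm v := by linarith
    _ ≤ ∑ s ∈ Finset.range (k+1), rearr x s + ε := by push_cast at hbound ⊢; linarith

noncomputable def cesaroLM (T : (ℕ → ℝ) →ₗ[ℝ] (ℕ → ℝ)) (n : ℕ) : (ℕ → ℝ) →ₗ[ℝ] (ℕ → ℝ) :=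
  (n : ℝ)⁻¹ • ∑ k ∈ Finset.range n, T ^ k

lemma cesaro_eq (T : (ℕ → ℝ) →ₗ[ℝ] (ℕ → ℝ)) (n : ℕ) (x : ℕ → ℝ) :
    cesaro T n x = cesaroLM T n x := by
  funext s
  simp only [cesaro, cesaroLM, LinearMap.smul_apply, LinearMap.coe_sum,
    Finset.sum_apply, Pi.smul_apply, smul_eq_mul]
  rw [div_eq_inv_mul]
  congr 1
  apply Finset.sum_congr rfl
  intro k _
  rw [Module.End.pow_apply]

lemma pow_DS {T : (ℕ → ℝ) →ₗ[ℝ] (ℕ → ℝ)} (hT : IsDS T) (k : ℕ) : IsDS (T ^ k) := by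
  induction k with
  | zero => exact ⟨fun x hx => ⟨by simpa using hx, by simp⟩, fun x hx => ⟨by simpa using hx, by simp⟩⟩
  | succ k ih =>
    constructor
    · intro x hx
      have h1 := ih.1 x hx
      have h2 := hT.1 _ h1.1
      rw [pow_succ']
      constructor
      · simpa [Module.End.mul_apply] using h2.1
      · calc ∑' m, |(T * T^k) x m| = ∑' m, |T ((T^k) x) m| := by
              simp [Module.End.mul_apply]
          _ ≤ ∑' m, |(T^k) x m| := h2.2
          _ ≤ ∑' m, |x m| := h1.2
    · intro x hx
      have h1 := ih.2 x hx
      have h2 := hT.2 _ h1.1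
      rw [pow_succ']
      constructor
      · simpa [Module.End.mul_apply] using h2.1
      · calc supNorm ((T * T^k) x) = supNorm (T ((T^k) x)) := by
              simp [Module.End.mul_apply]
          _ ≤ supNorm ((T^k) x) := h2.2
          _ ≤ supNorm x := h1.2

lemma cesaro_DS {T : (ℕ → ℝ) →ₗ[ℝ] (ℕ → ℝ)} (hT : IsDS T) {n : ℕ} (hn : 1 ≤ n) :
    IsDS (cesaroLM T n) := by
  have hnR : (0:ℝ) < n := by exact_mod_cast hn
  constructor
  · intro x hx
    have hpt : ∀ m, |cesaroLM T n x m| ≤ (n:ℝ)⁻¹ * ∑ k ∈ Finset.range n, |(T^k) x m| := by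
      intro m
      simp only [cesaroLM, LinearMap.smul_apply, LinearMap.coe_sum, Finset.sum_apply,
        Pi.smul_apply, smul_eq_mul, abs_mul, abs_inv, Nat.abs_cast]
      apply mul_le_mul_of_nonneg_left (Finset.abs_sum_le_sum_abs _ _) (by positivity)
    have hsk : ∀ k, Summable fun m => |(T^k) x m| := fun k => ((pow_DS hT k).1 x hx).1
    have hssum : Summable fun m => (n:ℝ)⁻¹ * ∑ k ∈ Finset.range n, |(T^k) x m| :=
      (summable_sum (fun k _ => hsk k)).mul_left _
    have hsum : Summable fun m => |cesaroLM T n x m| :=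
      Summable.of_nonneg_of_le (fun m => abs_nonneg _) hpt hssum
    refine ⟨hsum, ?_⟩
    calc ∑' m, |cesaroLM T n x m| ≤ ∑' m, (n:ℝ)⁻¹ * ∑ k ∈ Finset.range n, |(T^k) x m| :=
          hsum.tsum_le_tsum hpt hssum
      _ = (n:ℝ)⁻¹ * ∑ k ∈ Finset.range n, ∑' m, |(T^k) x m| := by
          rw [tsum_mul_left]
          congr 1
          exact Summable.tsum_finsetSum (fun k _ => hsk k)
      _ ≤ (n:ℝ)⁻¹ * ∑ k ∈ Finset.range n, ∑' m, |x m| := by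
          apply mul_le_mul_of_nonneg_left _ (by positivity)
          exact Finset.sum_le_sum fun k _ => ((pow_DS hT k).1 x hx).2
      _ = ∑' m, |x m| := by
          rw [Finset.sum_const, Finset.card_range, nsmul_eq_mul, ← mul_assoc,
            inv_mul_cancel₀ (ne_of_gt hnR), one_mul]
  · intro x hx
    have hbk : ∀ k, IsBdd ((T^k) x) := fun k => ((pow_DS hT k).2 x hx).1
    have hpt : ∀ m, |cesaroLM T n x m| ≤ supNorm x := by
      intro m
      simp only [cesaroLM, LinearMap.smul_apply, LinearMap.coe_sum, Finset.sum_apply,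
        Pi.smul_apply, smul_eq_mul, abs_mul, abs_inv, Nat.abs_cast]
      calc ((n:ℝ))⁻¹ * |∑ k ∈ Finset.range n, (T^k) x m|
          ≤ (n:ℝ)⁻¹ * ∑ k ∈ Finset.range n, |(T^k) x m| :=
            mul_le_mul_of_nonneg_left (Finset.abs_sum_le_sum_abs _ _) (by positivity)
        _ ≤ (n:ℝ)⁻¹ * ∑ k ∈ Finset.range n, supNorm x := by
            apply mul_le_mul_of_nonneg_left _ (by positivity)
            apply Finset.sum_le_sum
            intro k _
            exact le_trans (abs_le_supNorm (hbk k) m) ((pow_DS hT k).2 x hx).2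
        _ = supNorm x := by
            rw [Finset.sum_const, Finset.card_range, nsmul_eq_mul, ← mul_assoc,
              inv_mul_cancel₀ (ne_of_gt hnR), one_mul]
    exact ⟨⟨supNorm x, hpt⟩, supNorm_le hpt⟩


/-- If the Cesàro averages of `x ∈ ℓ∞` under a Dunford–Schwartz operator converge in
the `ℓ∞`-norm to `x̂`, then `x̂* ≺ x*` in the Hardy–Littlewood–Pólya sense. -/
theorem stmt12 (T : (ℕ → ℝ) →ₗ[ℝ] (ℕ → ℝ)) (hT : IsDS T)
    (x x' : ℕ → ℝ) (hx : IsBdd x) (hx' : IsBdd x')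
    (hconv : Tendsto (fun n => supNorm (fun s => cesaro T n x s - x' s)) atTop (nhds 0)) :
    ∀ k, ∑ s ∈ Finset.range (k + 1), rearr x' s ≤ ∑ s ∈ Finset.range (k + 1), rearr x s := by
  intro k
  have hb : ∀ n : ℕ, 1 ≤ n → IsBdd (cesaro T n x) := by
    intro n hn
    rw [cesaro_eq]
    exact ((cesaro_DS hT hn).2 x hx).1
  have hco : ∀ s, Tendsto (fun n => rearr (cesaro T n x) s) atTop (nhds (rearr x' s)) := by
    intro s
    have hev : ∀ᶠ n in atTop, ‖rearr (cesaro T n x) s - rearr x' s‖ ≤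
        supNorm (fun m => cesaro T n x m - x' m) := by
      filter_upwards [eventually_ge_atTop 1] with n hn
      exact abs_rearr_sub (hb n hn) hx' s
    have h0 := squeeze_zero_norm' hev hconv
    have := h0.add_const (rearr x' s)
    simpa using this
  have hsum : Tendsto (fun n => ∑ s ∈ Finset.range (k+1), rearr (cesaro T n x) s) atTop
      (nhds (∑ s ∈ Finset.range (k+1), rearr x' s)) :=
    tendsto_finset_sum _ (fun s _ => hco s)
  apply le_of_tendsto hsum
  filter_upwards [eventually_ge_atTop 1] with n hn
  have := DS_submajor (cesaro_DS hT hn) hx k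
  rwa [← cesaro_eq] at this
end
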